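/- Let f : ℝ → ℝ be a bounded measurable 1-periodic function (f(x+1) = f(x) for all x ≥ 0), let T > 0 and let k ∈ ℕ. Then (k+1) · t^{-(k+1)} · ∫₀^t s^k f(s/T) ds converges to ∫₀^1 f(u) du as t → ∞. -/

import Mathlib

open MeasureTheory Filter

lemma bdd_intervalIntegrable {φ : ℝ → ℝ} (hφ : Measurable φ) {C : ℝ} {a b : ℝ}
    (hC : ∀ x ∈ Set.uIoc a b, |φ x| ≤ C) : IntervalIntegrable φ volume a b := by
  refine (intervalIntegrable_const (c := C)).mono_fun' hφ.aestronglyMeasurable ?_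
  exact (ae_restrict_mem measurableSet_uIoc).mono hC

lemma fubini_id {h : ℝ → ℝ} (hm : Measurable h) {C : ℝ} (hC : ∀ x, |h x| ≤ C)
    (k : ℕ) {t : ℝ} (ht : 0 < t) :
    ∫ r in (0:ℝ)..t, (k : ℝ) * r ^ (k - 1) * ∫ s in (0:ℝ)..r, h s
      = t ^ k * (∫ s in (0:ℝ)..t, h s) - ∫ s in (0:ℝ)..t, s ^ k * h s := by
  rcases Nat.eq_zero_or_pos k with hk | hk
  · subst hk; simp
  have hC0 : 0 ≤ C := le_trans (abs_nonneg _) (hC 0)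
  set S : Set ℝ := Set.Ioc (0:ℝ) t with hS
  have hSm : MeasurableSet S := measurableSet_Ioc
  set μ : Measure ℝ := volume.restrict S with hμ
  haveI : IsFiniteMeasure μ := by
    constructor
    rw [hμ, Measure.restrict_apply_univ, hS, Real.volume_Ioc]
    exact ENNReal.ofReal_lt_top
  set G : ℝ → ℝ → ℝ := fun r s => if s ≤ r then (k : ℝ) * r ^ (k - 1) * h s else 0 with hG
  have hGmeas : Measurable (Function.uncurry G) := by
    apply Measurable.ite (measurableSet_le measurable_snd measurable_fst)
    · exact ((measurable_fst.pow_const (k-1)).const_mul _).mul (hm.comp measurable_snd)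
    · exact measurable_const
  have hGint : Integrable (Function.uncurry G) (μ.prod μ) := by
    refine Integrable.mono' (integrable_const ((k:ℝ) * t ^ (k-1) * C))
      hGmeas.aestronglyMeasurable ?_
    have hae : ∀ᵐ p ∂(μ.prod μ), p ∈ S ×ˢ S := by
      rw [hμ, Measure.prod_restrict]
      exact ae_restrict_mem (hSm.prod hSm)
    filter_upwards [hae] with p hp
    obtain ⟨hp1, hp2⟩ := hp
    by_cases hle : p.2 ≤ p.1
    · simp only [Function.uncurry, hG, if_pos hle, Real.norm_eq_abs]
      rw [abs_mul, abs_mul, abs_pow, Nat.abs_cast]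
      have h1 : |p.1| ≤ t := by
        rw [abs_of_pos hp1.1]; exact hp1.2
      have h2 : |p.1| ^ (k - 1) ≤ t ^ (k - 1) := pow_le_pow_left₀ (abs_nonneg _) h1 _
      refine mul_le_mul ?_ (hC p.2) (abs_nonneg _) (by positivity)
      exact mul_le_mul_of_nonneg_left h2 (Nat.cast_nonneg k)
    · simp only [Function.uncurry, hG, if_neg hle, norm_zero]
      positivity
  have inner1 : ∀ r ∈ S, (∫ s, G r s ∂μ) = (k:ℝ) * r ^ (k-1) * ∫ s in (0:ℝ)..r, h s := by
    intro r hr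
    have hGr : (fun s => G r s) = Set.indicator (Set.Iic r) (fun s => (k:ℝ) * r ^ (k-1) * h s) := by
      funext s
      simp [hG, Set.indicator_apply, Set.mem_Iic]
    rw [hGr, hμ, integral_indicator measurableSet_Iic, Measure.restrict_restrict measurableSet_Iic]
    have hset : Set.Iic r ∩ S = Set.Ioc 0 r := by
      ext x
      simp only [hS, Set.mem_inter_iff, Set.mem_Iic, Set.mem_Ioc]
      exact ⟨fun ⟨a, b, _⟩ => ⟨b, a⟩, fun ⟨a, b⟩ => ⟨b, a, b.trans hr.2⟩⟩
    rw [hset, MeasureTheory.integral_const_mul, ← intervalIntegral.integral_of_le hr.1.le]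
  have inner2 : ∀ s ∈ S, (∫ r, G r s ∂μ) = (t ^ k - s ^ k) * h s := by
    intro s hs
    have hGs : (fun r => G r s) = Set.indicator (Set.Ici s) (fun r => (k:ℝ) * r ^ (k-1) * h s) := by
      funext r; simp [hG, Set.indicator_apply, Set.mem_Ici]
    rw [hGs, hμ, integral_indicator measurableSet_Ici, Measure.restrict_restrict measurableSet_Ici]
    have hset : Set.Ici s ∩ S = Set.Icc s t := by
      ext x
      simp only [hS, Set.mem_inter_iff, Set.mem_Ici, Set.mem_Ioc, Set.mem_Icc]
      exact ⟨fun ⟨a, _, c⟩ => ⟨a, c⟩, fun ⟨a, b⟩ => ⟨a, hs.1.trans_le a, b⟩⟩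
    rw [hset, integral_Icc_eq_integral_Ioc, ← intervalIntegral.integral_of_le hs.2]
    rw [intervalIntegral.integral_mul_const, intervalIntegral.integral_const_mul, integral_pow]
    obtain ⟨m, rfl⟩ : ∃ m, k = m + 1 := ⟨k - 1, (Nat.succ_pred_eq_of_pos hk).symm⟩
    simp only [Nat.add_sub_cancel]
    have : ((m:ℝ) + 1) ≠ 0 := by positivity
    push_cast
    field_simp
  have LHSeq : ∫ r in (0:ℝ)..t, (k:ℝ) * r ^ (k-1) * ∫ s in (0:ℝ)..r, h s
      = ∫ r, ∫ s, G r s ∂μ ∂μ := by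
    rw [intervalIntegral.integral_of_le ht.le]
    exact setIntegral_congr_fun hSm fun r hr => (inner1 r hr).symm
  have swap : ∫ r, ∫ s, G r s ∂μ ∂μ = ∫ s, ∫ r, G r s ∂μ ∂μ := integral_integral_swap hGint
  have RHSeq : ∫ s, ∫ r, G r s ∂μ ∂μ
      = t ^ k * (∫ s in (0:ℝ)..t, h s) - ∫ s in (0:ℝ)..t, s ^ k * h s := by
    rw [show (∫ s, ∫ r, G r s ∂μ ∂μ) = ∫ s in S, (t ^ k - s ^ k) * h s from
      setIntegral_congr_fun hSm inner2]
    rw [hS, ← intervalIntegral.integral_of_le ht.le]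
    have h1 : IntervalIntegrable (fun s => t ^ k * h s) volume 0 t :=
      bdd_intervalIntegrable (hm.const_mul _) (C := |t ^ k| * C)
        (fun x _ => by rw [abs_mul]; gcongr; exact hC x)
    have h2 : IntervalIntegrable (fun s => s ^ k * h s) volume 0 t := by
      refine bdd_intervalIntegrable ((measurable_id.pow_const k).mul hm) (C := t ^ k * C) ?_
      intro x hx
      rw [Set.uIoc_of_le ht.le] at hx
      show |x ^ k * h x| ≤ t ^ k * C
      rw [abs_mul, abs_pow]
      have hx1 : |x| ≤ t := by rw [abs_of_pos hx.1]; exact hx.2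
      exact mul_le_mul (pow_le_pow_left₀ (abs_nonneg _) hx1 k) (hC x) (abs_nonneg _) (by positivity)
    simp only [sub_mul]
    rw [intervalIntegral.integral_sub h1 h2, intervalIntegral.integral_const_mul]
  rw [LHSeq, swap, RHSeq]

lemma primitive_add_nat {h : ℝ → ℝ} (hm : Measurable h) {C : ℝ} (hC : ∀ x, |h x| ≤ C)
    {T : ℝ} (hper : Function.Periodic h T) (x : ℝ) (n : ℕ) :
    ∫ s in (0:ℝ)..(x + n * T), h s = (∫ s in (0:ℝ)..x, h s) + n * ∫ s in (0:ℝ)..T, h s := by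
  have hint : ∀ a b : ℝ, IntervalIntegrable h volume a b := fun a b =>
    bdd_intervalIntegrable hm (fun y _ => hC y)
  induction n with
  | zero => simp
  | succ n ih =>
    have hend : x + ((n:ℝ) + 1) * T = x + (n:ℝ) * T + T := by ring
    push_cast
    rw [hend, ← intervalIntegral.integral_add_adjacent_intervals (hint 0 (x + n * T)) (hint _ _),
      ih]
    have hper' : ∫ s in (x + (n:ℝ) * T)..(x + (n:ℝ) * T + T), h s = ∫ s in (0:ℝ)..T, h s := by
      simpa using hper.intervalIntegral_add_eq (x + (n:ℝ) * T) 0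
    rw [hper']; ring

lemma primitive_bound {h : ℝ → ℝ} (hm : Measurable h) {C : ℝ} (hC : ∀ x, |h x| ≤ C)
    {T : ℝ} (hT : 0 < T) (hper : Function.Periodic h T) {t : ℝ} (ht : 0 ≤ t) :
    |(∫ s in (0:ℝ)..t, h s) - (∫ s in (0:ℝ)..T, h s) / T * t| ≤ 2 * C * T := by
  have hC0 : 0 ≤ C := le_trans (abs_nonneg _) (hC 0)
  set L' := ∫ s in (0:ℝ)..T, h s with hL'
  set n : ℕ := ⌊t / T⌋.toNat with hn
  have hfl : (0:ℤ) ≤ ⌊t / T⌋ := Int.floor_nonneg.2 (div_nonneg ht hT.le)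
  have hcast : ((n:ℤ) : ℝ) = ((⌊t / T⌋ : ℤ) : ℝ) := by
    rw [hn, Int.toNat_of_nonneg hfl]
  have hcast' : (n : ℝ) = ((⌊t / T⌋ : ℤ) : ℝ) := by exact_mod_cast hcast
  have h1 : (n:ℝ) * T ≤ t := by
    rw [hcast']
    have := Int.floor_le (t / T)
    calc ((⌊t / T⌋ : ℤ) : ℝ) * T ≤ t / T * T := by nlinarith
    _ = t := div_mul_cancel₀ t hT.ne'
  have h2 : t - (n:ℝ) * T ≤ T := by
    rw [hcast']
    have := Int.lt_floor_add_one (t / T)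
    nlinarith [div_mul_cancel₀ t hT.ne']
  set x := t - (n:ℝ) * T with hx
  have hx0 : 0 ≤ x := by simp [hx]; linarith
  have ht' : t = x + (n:ℝ) * T := by ring
  have hsplit := primitive_add_nat hm hC hper x n
  rw [← ht'] at hsplit
  have hFx : |∫ s in (0:ℝ)..x, h s| ≤ C * T := by
    have := intervalIntegral.norm_integral_le_of_norm_le_const (C := C)
      (f := h) (a := 0) (b := x) (fun y _ => hC y)
    rw [Real.norm_eq_abs] at this
    calc |∫ s in (0:ℝ)..x, h s| ≤ C * |x - 0| := this
    _ = C * x := by rw [sub_zero, abs_of_nonneg hx0]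
    _ ≤ C * T := by nlinarith
  have hL'b : |L'| ≤ C * T := by
    have := intervalIntegral.norm_integral_le_of_norm_le_const (C := C)
      (f := h) (a := 0) (b := T) (fun y _ => hC y)
    rw [Real.norm_eq_abs] at this
    calc |L'| ≤ C * |T - 0| := this
    _ = C * T := by rw [sub_zero, abs_of_pos hT]
  have key : (∫ s in (0:ℝ)..t, h s) - L' / T * t = (∫ s in (0:ℝ)..x, h s) - L' / T * x := by
    rw [hsplit, ht']
    field_simp
    ring
  rw [key]
  have hB : |L' / T * x| ≤ C * T := by
    rw [abs_mul, abs_div, abs_of_pos hT, abs_of_nonneg hx0, div_mul_eq_mul_div, div_le_iff₀ hT]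
    nlinarith [abs_nonneg L']
  rw [sub_eq_add_neg]
  refine (abs_add_le _ _).trans ?_
  rw [abs_neg]
  linarith

/-- Deterministic core of the ergodic Lemma (σ ≡ 1): for a bounded measurable
1-periodic function `f`, `(k+1) t^{-(k+1)} ∫₀^t s^k f(s/T) ds → ∫₀^1 f(u) du` as `t → ∞`. -/
theorem periodic_weighted_average_tendsto
    (f : ℝ → ℝ) (hf_meas : Measurable f)
    (hf_bdd : ∃ C : ℝ, ∀ x : ℝ, |f x| ≤ C)
    (hf_per : ∀ x : ℝ, 0 ≤ x → f (x + 1) = f x)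
    (T : ℝ) (hT : 0 < T) (k : ℕ) :
    Tendsto
      (fun t : ℝ =>
        ((k : ℝ) + 1) * t ^ (-((k : ℤ) + 1)) * ∫ s in (0:ℝ)..t, s ^ k * f (s / T))
      atTop (nhds (∫ u in (0:ℝ)..1, f u)) := by
  obtain ⟨C₀, hC₀⟩ := hf_bdd
  have hC0 : 0 ≤ C₀ := le_trans (abs_nonneg _) (hC₀ 0)
  set g : ℝ → ℝ := fun x => f (Int.fract x) with hg
  have hg_meas : Measurable g := hf_meas.comp measurable_fract
  have hg_bdd : ∀ x, |g x| ≤ C₀ := fun x => hC₀ _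
  have hfn : ∀ (n : ℕ) (x : ℝ), 0 ≤ x → f (x + n) = f x := by
    intro n
    induction n with
    | zero => simp
    | succ n ih =>
      intro x hx
      have he : x + ((n:ℝ) + 1) = (x + n) + 1 := by ring
      push_cast
      rw [he, hf_per _ (add_nonneg hx (Nat.cast_nonneg n)), ih x hx]
  have hgf : ∀ x : ℝ, 0 ≤ x → g x = f x := by
    intro x hx
    have hfloor : (0:ℤ) ≤ ⌊x⌋ := Int.floor_nonneg.2 hx
    have hfx : f x = f (Int.fract x + (⌊x⌋.toNat : ℕ)) := by
      congr 1
      have hcast : ((⌊x⌋.toNat : ℕ) : ℝ) = ((⌊x⌋ : ℤ) : ℝ) := by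
        exact_mod_cast congrArg (fun z : ℤ => (z : ℝ)) (Int.toNat_of_nonneg hfloor)
      rw [hcast, Int.fract_add_floor]
    rw [hfx, hfn _ _ (Int.fract_nonneg x)]
  have hg_per : Function.Periodic g 1 := fun x => by simp [hg, Int.fract_add_one]
  set h : ℝ → ℝ := fun s => g (s / T) with hh
  have hh_meas : Measurable h := hg_meas.comp (measurable_id.div_const T)
  have hh_bdd : ∀ x, |h x| ≤ C₀ := fun x => hg_bdd _
  have hh_per : Function.Periodic h T := by
    intro x
    have he : (x + T) / T = x / T + 1 := by field_simp
    simp only [hh]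
    rw [he, hg_per]
  set L : ℝ := ∫ u in (0:ℝ)..1, f u with hL
  have hg_int : ∫ u in (0:ℝ)..1, g u = L := by
    rw [hL]
    apply intervalIntegral.integral_congr
    intro x hx
    rw [Set.uIcc_of_le (by norm_num : (0:ℝ) ≤ 1)] at hx
    exact hgf x hx.1
  have hTL : (∫ s in (0:ℝ)..T, h s) = T * L := by
    simp only [hh]
    rw [intervalIntegral.integral_comp_div _ hT.ne', zero_div, div_self hT.ne', smul_eq_mul,
      hg_int]
  set M : ℝ := 2 * C₀ * T with hM
  have hM0 : 0 ≤ M := by positivity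
  have hρ : ∀ t : ℝ, 0 ≤ t → |(∫ s in (0:ℝ)..t, h s) - L * t| ≤ M := by
    intro t ht
    have hb := primitive_bound hh_meas hh_bdd hT hh_per ht
    rw [hTL] at hb
    have he : T * L / T = L := by field_simp
    rwa [he] at hb
  have hint : ∀ a b : ℝ, IntervalIntegrable h volume a b := fun a b =>
    bdd_intervalIntegrable hh_meas fun y _ => hh_bdd y
  have hFcont : Continuous (fun r => ∫ s in (0:ℝ)..r, h s) :=
    intervalIntegral.continuous_primitive hint 0
  have hk1 : ((k:ℝ) + 1) ≠ 0 := by positivity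
  -- key estimate
  have hest : ∀ t : ℝ, 1 ≤ t →
      |(∫ s in (0:ℝ)..t, s ^ k * h s) - L * t ^ (k+1) / ((k:ℝ) + 1)|
        ≤ ((k:ℝ) + 1) * M * t ^ k := by
    intro t ht1
    have ht : (0:ℝ) < t := lt_of_lt_of_le one_pos ht1
    have hfub := fubini_id hh_meas hh_bdd k ht
    set F : ℝ → ℝ := fun r => ∫ s in (0:ℝ)..r, h s with hF
    set ρ : ℝ → ℝ := fun r => F r - L * r with hρdef
    have hρcont : Continuous ρ := hFcont.sub (continuous_const.mul continuous_id)
    have hpt : ∀ r : ℝ, (k:ℝ) * r ^ (k-1) * F r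
        = (k:ℝ) * r ^ (k-1) * ρ r + L * ((k:ℝ) * r ^ k) := by
      intro r
      rcases Nat.eq_zero_or_pos k with hk | hk
      · subst hk; simp [hρdef]
      · obtain ⟨m, hm⟩ : ∃ m, k = m + 1 := ⟨k-1, (Nat.succ_pred_eq_of_pos hk).symm⟩
        subst hm
        simp only [hρdef, Nat.add_sub_cancel]
        push_cast
        ring
    have int1 : IntervalIntegrable (fun r => (k:ℝ) * r ^ (k-1) * ρ r) volume 0 t :=
      (((continuous_const.mul (continuous_pow _)).mul hρcont)).intervalIntegrable 0 t
    have int2 : IntervalIntegrable (fun r => L * ((k:ℝ) * r ^ k)) volume 0 t :=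
      (continuous_const.mul (continuous_const.mul (continuous_pow k))).intervalIntegrable 0 t
    have hJ : (∫ r in (0:ℝ)..t, (k:ℝ) * r ^ (k-1) * F r)
        = (∫ r in (0:ℝ)..t, (k:ℝ) * r ^ (k-1) * ρ r)
          + L * ((k:ℝ) * (t ^ (k+1) / ((k:ℝ) + 1))) := by
      simp_rw [hpt]
      rw [intervalIntegral.integral_add int1 int2, intervalIntegral.integral_const_mul,
        intervalIntegral.integral_const_mul, integral_pow]
      push_cast
      ring
    have hρb : ∀ r ∈ Set.uIoc (0:ℝ) t, |(k:ℝ) * r ^ (k-1) * ρ r| ≤ (k:ℝ) * t ^ (k-1) * M := by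
      intro r hr
      rw [Set.uIoc_of_le ht.le] at hr
      rw [abs_mul, abs_mul, abs_pow, Nat.abs_cast]
      have hr1 : |r| ≤ t := by rw [abs_of_pos hr.1]; exact hr.2
      refine mul_le_mul ?_ (hρ r hr.1.le) (abs_nonneg _) (by positivity)
      exact mul_le_mul_of_nonneg_left (pow_le_pow_left₀ (abs_nonneg _) hr1 _) (Nat.cast_nonneg k)
    have hJb : |∫ r in (0:ℝ)..t, (k:ℝ) * r ^ (k-1) * ρ r| ≤ (k:ℝ) * M * t ^ k := by
      have hb := intervalIntegral.norm_integral_le_of_norm_le_const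
        (C := (k:ℝ) * t ^ (k-1) * M) (f := fun r => (k:ℝ) * r ^ (k-1) * ρ r) (a := 0) (b := t)
        (fun y hy => by rw [Real.norm_eq_abs]; exact hρb y hy)
      rw [Real.norm_eq_abs, sub_zero, abs_of_pos ht] at hb
      refine hb.trans (le_of_eq ?_)
      rcases Nat.eq_zero_or_pos k with hk | hk
      · subst hk; simp
      · obtain ⟨m, hm⟩ : ∃ m, k = m + 1 := ⟨k-1, (Nat.succ_pred_eq_of_pos hk).symm⟩
        subst hm
        simp only [Nat.add_sub_cancel]
        ring
    have hFt : F t = ρ t + L * t := by simp [hρdef]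
    have hD : (∫ s in (0:ℝ)..t, s ^ k * h s) - L * t ^ (k+1) / ((k:ℝ) + 1)
        = t ^ k * ρ t - ∫ r in (0:ℝ)..t, (k:ℝ) * r ^ (k-1) * ρ r := by
      have hA : (∫ s in (0:ℝ)..t, s ^ k * h s)
          = t ^ k * F t - ∫ r in (0:ℝ)..t, (k:ℝ) * r ^ (k-1) * F r := by
        rw [hfub]; ring
      rw [hA, hJ, hFt]
      field_simp
      ring
    rw [hD]
    have hbt : |t ^ k * ρ t| ≤ t ^ k * M := by
      rw [abs_mul, abs_of_nonneg (pow_nonneg ht.le k)]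
      exact mul_le_mul_of_nonneg_left (hρ t ht.le) (pow_nonneg ht.le k)
    rw [sub_eq_add_neg]
    refine (abs_add_le _ _).trans ?_
    rw [abs_neg]
    have : ((k:ℝ) + 1) * M * t ^ k = t ^ k * M + (k:ℝ) * M * t ^ k := by ring
    rw [this]
    exact add_le_add hbt hJb
  -- pass from f to h in the integrand
  have hcongr : ∀ᶠ t in atTop,
      ((k : ℝ) + 1) * t ^ (-((k : ℤ) + 1)) * ∫ s in (0:ℝ)..t, s ^ k * f (s / T)
        = ((k : ℝ) + 1) * t ^ (-((k : ℤ) + 1)) * ∫ s in (0:ℝ)..t, s ^ k * h s := by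
    filter_upwards [eventually_ge_atTop (0:ℝ)] with t ht
    congr 1
    apply intervalIntegral.integral_congr
    intro s hs
    rw [Set.uIcc_of_le ht] at hs
    have hs0 : 0 ≤ s / T := div_nonneg hs.1 hT.le
    simp only [hh]
    rw [hgf _ hs0]
  refine Tendsto.congr' (Filter.EventuallyEq.symm hcongr) ?_
  -- squeeze
  have hnorm : ∀ᶠ t in atTop,
      ‖((k : ℝ) + 1) * t ^ (-((k : ℤ) + 1)) * (∫ s in (0:ℝ)..t, s ^ k * h s) - L‖
        ≤ ((k:ℝ) + 1) ^ 2 * M / t := by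
    filter_upwards [eventually_ge_atTop (1:ℝ)] with t ht1
    have ht : (0:ℝ) < t := lt_of_lt_of_le one_pos ht1
    have htk : (0:ℝ) < t ^ (k+1) := pow_pos ht _
    have hzpow : t ^ (-((k : ℤ) + 1)) = (t ^ (k+1))⁻¹ := by
      have he : (-((k : ℤ) + 1)) = -((k+1 : ℕ) : ℤ) := by push_cast; ring
      rw [he, zpow_neg, zpow_natCast]
    rw [Real.norm_eq_abs, hzpow]
    have heq : ((k : ℝ) + 1) * (t ^ (k+1))⁻¹ * (∫ s in (0:ℝ)..t, s ^ k * h s) - L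
        = ((k:ℝ) + 1) * ((∫ s in (0:ℝ)..t, s ^ k * h s) - L * t ^ (k+1) / ((k:ℝ)+1))
          / t ^ (k+1) := by
      field_simp
    rw [heq, abs_div, abs_of_pos htk, abs_mul, abs_of_pos (by positivity : (0:ℝ) < (k:ℝ)+1),
      div_le_div_iff₀ htk ht]
    calc ((k:ℝ) + 1) * |(∫ s in (0:ℝ)..t, s ^ k * h s) - L * t ^ (k+1) / ((k:ℝ)+1)| * t
        ≤ ((k:ℝ) + 1) * (((k:ℝ) + 1) * M * t ^ k) * t := by
          gcongr
          exact hest t ht1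
      _ = ((k:ℝ) + 1) ^ 2 * M * t ^ (k+1) := by ring
  have hlim : Tendsto (fun t : ℝ => ((k:ℝ) + 1) ^ 2 * M / t) atTop (nhds 0) :=
    Tendsto.div_atTop tendsto_const_nhds tendsto_id
  have hz := squeeze_zero_norm' hnorm hlim
  have := hz.add_const L
  simpa using this
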